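/- arXiv:2102.05910 — 3 statements merged into one kernel-verified Lean document; each statement's English description precedes it below -/
import Mathlib

section
/- Let θ ≥ 0, α_f ≥ 1/2, α₂ ≥ α_f, γ₂ = 1/2 - α_f + α₂, and θ₂ = (α₂ + α_f γ₂ θ)⁻¹. Then -1 ≤ (α₂ + (α_f - 1)γ₂θ)·θ₂ ≤ 1. -/
theorem stmt_1 (θ αf α₂ γ₂ θ₂ : ℝ) (hθ : 0 ≤ θ) (hαf : 1/2 ≤ αf) (hα₂ : αf ≤ α₂)
    (hγ : γ₂ = 1/2 - αf + α₂) (hθ₂ : θ₂ = (α₂ + αf * γ₂ * θ)⁻¹) :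
    -1 ≤ (α₂ + (αf - 1) * γ₂ * θ) * θ₂ ∧ (α₂ + (αf - 1) * γ₂ * θ) * θ₂ ≤ 1 := by
  have hγpos : (0:ℝ) < γ₂ := by rw [hγ]; linarith
  have hD : (0:ℝ) < α₂ + αf * γ₂ * θ := by nlinarith [mul_nonneg (mul_nonneg (by linarith : (0:ℝ) ≤ αf) hγpos.le) hθ]
  subst hθ₂
  rw [← div_eq_mul_inv]
  constructor
  · rw [le_div_iff₀ hD, neg_one_mul]
    nlinarith
  · rw [div_le_one hD]
    nlinarith
end

section
/- Let α_k ≥ α_f ≥ 1/2 with α_k > 0, γ_k = 1/2 - α_f + α_k > 0, and θ ∈ ℂ with Re(θ) ≥ 0. Then |(α_k + (α_f - 1)γ_k θ) / (α_k + α_f γ_k θ)| ≤ 1. -/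
theorem stmt_7 (αk αf γk : ℝ) (hαf : 1/2 ≤ αf) (hαk : αf ≤ αk) (hαk0 : 0 < αk)
    (hγk : γk = 1/2 - αf + αk) (hγk0 : 0 < γk)
    (θ : ℂ) (hθ : 0 ≤ θ.re) :
    ‖(((αk : ℂ) + ((αf : ℂ) - 1) * (γk : ℂ) * θ) /
      ((αk : ℂ) + (αf : ℂ) * (γk : ℂ) * θ))‖ ≤ 1 := by
  by_cases hD : ((αk : ℂ) + (αf : ℂ) * (γk : ℂ) * θ) = 0
  · simp [hD]
  · rw [norm_div, div_le_one (norm_pos_iff.mpr hD), Complex.norm_def, Complex.norm_def]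
    apply Real.sqrt_le_sqrt
    simp only [Complex.normSq_apply, Complex.add_re, Complex.add_im, Complex.mul_re,
      Complex.mul_im, Complex.sub_re, Complex.sub_im, Complex.ofReal_re, Complex.ofReal_im,
      Complex.one_re, Complex.one_im]
    ring_nf
    nlinarith [sq_nonneg θ.re, sq_nonneg θ.im, mul_nonneg (mul_nonneg hγk0.le hαk0.le) hθ, mul_nonneg (mul_nonneg (by linarith : (0:ℝ) ≤ 2*αf-1) (mul_pos hγk0 hγk0).le) (add_nonneg (sq_nonneg θ.re) (sq_nonneg θ.im))]
end

section
/- Let α_k ≥ α_f ≥ 1/2, γ_k = 1/2 - α_f + α_k. Then as θ → +∞ along the reals, both eigenvalues of G_k(θ) = θ_k·[[α_k+(α_f-1)γ_kθ, α_k-γ_k], [-θ, α_k+α_f(γ_k-1)θ-1]] (with θ_k = (α_k+α_fγ_kθ)⁻¹) converge to (α_f-1)/α_f and (γ_k-1)/γ_k respectively. -/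
open Polynomial Filter Topology


-- charpoly of a 2x2 matrix
lemma aux_charpoly_fin_two (M : Matrix (Fin 2) (Fin 2) ℝ) :
    M.charpoly = X ^ 2 - C M.trace * X + C M.det := by
  rw [Matrix.charpoly, Matrix.det_fin_two, Matrix.trace_fin_two, Matrix.det_fin_two]
  rw [Matrix.charmatrix_apply_eq, Matrix.charmatrix_apply_eq,
    Matrix.charmatrix_apply_ne _ _ _ (by decide : (0:Fin 2) ≠ 1),
    Matrix.charmatrix_apply_ne _ _ _ (by decide : (1:Fin 2) ≠ 0)]
  simp only [map_add, map_sub, map_mul]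
  ring

-- roots from Vieta
lemma aux_roots (M : Matrix (Fin 2) (Fin 2) ℝ) (a b : ℂ)
    (h1 : a + b = (M.trace : ℂ)) (h2 : a * b = (M.det : ℂ)) :
    ((M.charpoly.map (algebraMap ℝ ℂ)).roots) = {a, b} := by
  have : M.charpoly.map (algebraMap ℝ ℂ) = (X - C a) * (X - C b) := by
    rw [aux_charpoly_fin_two]
    simp only [Polynomial.map_add, Polynomial.map_sub, Polynomial.map_mul, Polynomial.map_pow,
      Polynomial.map_X, Polynomial.map_C, Complex.coe_algebraMap]
    rw [← h1, ← h2]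
    -- push_cast not needed
    simp only [map_add, map_mul]
    ring
  rw [this, Polynomial.roots_mul (by
      apply mul_ne_zero <;> exact Polynomial.X_sub_C_ne_zero _),
    Polynomial.roots_X_sub_C, Polynomial.roots_X_sub_C]
  rfl


lemma aux_cpow_half_sq (x : ℝ) (hx : 0 ≤ x) :
    (((x ^ 2 : ℝ) : ℂ)) ^ (2⁻¹ : ℂ) = (x : ℂ) := by
  have h2 : ((2⁻¹ : ℝ) : ℂ) = (2⁻¹ : ℂ) := by norm_num
  rw [← h2, ← Complex.ofReal_cpow (by positivity)]
  congr 1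
  rw [← Real.rpow_natCast x 2, ← Real.rpow_mul hx]
  norm_num

-- limit of complex square root of a real function
lemma aux_csqrt_tendsto (f : ℝ → ℝ) (c : ℝ) (hc : 0 ≤ c)
    (hf : Tendsto f atTop (nhds (c ^ 2))) :
    Tendsto (fun θ => ((f θ : ℂ)) ^ (2⁻¹ : ℂ)) atTop (nhds (c : ℂ)) := by
  rcases eq_or_lt_of_le hc with h0 | hpos
  · -- c = 0
    rw [← h0] at hf ⊢
    norm_num at hf
    rw [show ((0 : ℝ) : ℂ) = 0 by norm_num]
    rw [tendsto_zero_iff_norm_tendsto_zero]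
    have key : ∀ θ, ‖((f θ : ℂ)) ^ (2⁻¹ : ℂ)‖ = Real.sqrt |f θ| := by
      intro θ
      have : ((2⁻¹ : ℝ) : ℂ) = (2⁻¹ : ℂ) := by norm_num
      rw [← this, Complex.norm_cpow_real, Real.sqrt_eq_rpow]
      norm_num [Complex.norm_real]
    simp only [key]
    have : Tendsto (fun θ => |f θ|) atTop (nhds 0) := by
      simpa using hf.abs
    simpa [Function.comp_def] using (Real.continuous_sqrt.continuousAt (x := 0)).tendsto.comp this
  · -- c > 0
    have hcont : ContinuousAt (fun z : ℂ => z ^ (2⁻¹ : ℂ)) ((c ^ 2 : ℝ) : ℂ) := by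
      apply continuousAt_cpow_const
      rw [Complex.mem_slitPlane_iff]
      left
      simp only [Complex.ofReal_re]
      positivity
    have hmap : Tendsto (fun θ => ((f θ : ℂ))) atTop (nhds ((c ^ 2 : ℝ) : ℂ)) :=
      (Complex.continuous_ofReal.continuousAt.tendsto).comp hf
    have := hcont.tendsto.comp hmap
    rwa [aux_cpow_half_sq c hc] at this

-- quadratic eigenvalue functions
lemma aux_quad (t d : ℝ → ℝ) (L₁ L₂ : ℝ) (hL : L₂ ≤ L₁)
    (ht : Tendsto t atTop (nhds (L₁ + L₂)))
    (hd : Tendsto d atTop (nhds (L₁ * L₂))) :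
    ∃ e₁ e₂ : ℝ → ℂ,
      (∀ θ, e₁ θ + e₂ θ = (t θ : ℂ) ∧ e₁ θ * e₂ θ = (d θ : ℂ)) ∧
      Tendsto e₁ atTop (nhds (L₁ : ℂ)) ∧ Tendsto e₂ atTop (nhds (L₂ : ℂ)) := by
  set s : ℝ → ℂ := fun θ => (((t θ ^ 2 - 4 * d θ : ℝ) : ℂ)) ^ (2⁻¹ : ℂ) with hs
  have hssq : ∀ θ, s θ ^ 2 = ((t θ ^ 2 - 4 * d θ : ℝ) : ℂ) := by
    intro θ
    simp only [hs]
    rw [show (2⁻¹ : ℂ) = (((2 : ℕ) : ℂ))⁻¹ by norm_num]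
    exact Complex.cpow_nat_inv_pow _ two_ne_zero
  refine ⟨fun θ => ((t θ : ℂ) + s θ) / 2, fun θ => ((t θ : ℂ) - s θ) / 2, ?_, ?_, ?_⟩
  · intro θ
    constructor
    · ring
    · have : ((t θ : ℂ) + s θ) / 2 * (((t θ : ℂ) - s θ) / 2)
          = ((t θ : ℂ) ^ 2 - s θ ^ 2) / 4 := by ring
      rw [this, hssq θ]
      push_cast
      ring
  · have hst : Tendsto s atTop (nhds ((L₁ - L₂ : ℝ) : ℂ)) := by
      apply aux_csqrt_tendsto _ _ (by linarith)
      have : Tendsto (fun θ => t θ ^ 2 - 4 * d θ) atTop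
          (nhds ((L₁ + L₂) ^ 2 - 4 * (L₁ * L₂))) := ((ht.pow 2).sub (hd.const_mul 4))
      convert this using 2
      ring
    have := ((Complex.continuous_ofReal.continuousAt.tendsto.comp ht).add hst).div_const 2
    convert this using 2
    all_goals push_cast [Function.comp_apply]
    all_goals ring
  · have hst : Tendsto s atTop (nhds ((L₁ - L₂ : ℝ) : ℂ)) := by
      apply aux_csqrt_tendsto _ _ (by linarith)
      have : Tendsto (fun θ => t θ ^ 2 - 4 * d θ) atTop
          (nhds ((L₁ + L₂) ^ 2 - 4 * (L₁ * L₂))) := ((ht.pow 2).sub (hd.const_mul 4))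
      convert this using 2
      ring
    have := ((Complex.continuous_ofReal.continuousAt.tendsto.comp ht).sub hst).div_const 2
    convert this using 2
    all_goals push_cast [Function.comp_apply]
    all_goals ring

lemma aux_comp_inv (F f : ℝ → ℝ) (hF : ContinuousAt F 0)
    (hf : ∀ θ : ℝ, 1 ≤ θ → f θ = F θ⁻¹) : Tendsto f atTop (nhds (F 0)) := by
  have h := hF.tendsto.comp tendsto_inv_atTop_zero
  apply h.congr'
  filter_upwards [eventually_ge_atTop 1] with θ hθ
  exact (hf θ hθ).symm

theorem stmt_13 (αk αf γk : ℝ) (hαf : 1/2 ≤ αf) (hαk : αf ≤ αk)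
    (hγk : γk = 1/2 - αf + αk)
    (Gk : ℝ → Matrix (Fin 2) (Fin 2) ℝ)
    (hGk : ∀ θ : ℝ, Gk θ = (αk + αf * γk * θ)⁻¹ •
      Matrix.of ![![αk + (αf - 1) * γk * θ, αk - γk],
                  ![-θ, αk + αf * (γk - 1) * θ - 1]]) :
    ∃ e₁ e₂ : ℝ → ℂ,
      (∀ θ : ℝ, 0 < θ →
        (((Gk θ).charpoly.map (algebraMap ℝ ℂ)).roots = {e₁ θ, e₂ θ})) ∧
      Filter.Tendsto e₁ Filter.atTop (nhds (((αf - 1) / αf : ℝ) : ℂ)) ∧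
      Filter.Tendsto e₂ Filter.atTop (nhds (((γk - 1) / γk : ℝ) : ℂ)) := by
  have hαf0 : 0 < αf := lt_of_lt_of_le (by norm_num) hαf
  have hγ0 : 0 < γk := by rw [hγk]; linarith
  have hαk0 : 0 < αk := lt_of_lt_of_le hαf0 hαk
  set L₁ : ℝ := (αf - 1) / αf with hL₁
  set L₂ : ℝ := (γk - 1) / γk with hL₂
  -- trace and det formulas
  have htr : ∀ θ : ℝ, (Gk θ).trace
      = (αk + αf * γk * θ)⁻¹ * ((αk + (αf - 1) * γk * θ) + (αk + αf * (γk - 1) * θ - 1)) := by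
    intro θ
    rw [hGk θ]
    simp [Matrix.trace_fin_two, Matrix.smul_apply]
    ring
  have hdet : ∀ θ : ℝ, (Gk θ).det
      = ((αk + αf * γk * θ)⁻¹) ^ 2 *
        ((αk + (αf - 1) * γk * θ) * (αk + αf * (γk - 1) * θ - 1) - (αk - γk) * (-θ)) := by
    intro θ
    rw [hGk θ]
    rw [Matrix.det_smul, Matrix.det_fin_two]
    simp [Matrix.smul_apply]
    try ring
  -- limits of trace and det
  have hden : ∀ u : ℝ, 0 ≤ u → 0 < αk * u + αf * γk := by
    intro u hu
    have : 0 ≤ αk * u := by positivity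
    nlinarith
  set F₁ : ℝ → ℝ := fun u => ((2 * αk - 1) * u + ((αf - 1) * γk + αf * (γk - 1)))
      / (αk * u + αf * γk) with hF₁
  set F₂ : ℝ → ℝ := fun u => ((αk * u + (αf - 1) * γk) * (αk * u + αf * (γk - 1) - u)
      + (αk - γk) * u) / (αk * u + αf * γk) ^ 2 with hF₂
  have ht : Tendsto (fun θ => (Gk θ).trace) atTop (nhds (L₁ + L₂)) := by
    have key := aux_comp_inv F₁ (fun θ => (Gk θ).trace) ?_ ?_
    · convert key using 2
      show L₁ + L₂ = F₁ 0
      rw [hF₁, hL₁, hL₂]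
      simp only [mul_zero, zero_add, zero_mul]
      field_simp
    · apply ContinuousAt.div (by fun_prop) (by fun_prop)
      simpa using (hden 0 le_rfl).ne'
    · intro θ hθ
      have hθ0 : (0:ℝ) < θ := by linarith
      show (Gk θ).trace = F₁ θ⁻¹
      rw [htr θ, hF₁]
      simp only
      have h1 : αk + αf * γk * θ > 0 := by nlinarith [mul_pos (mul_pos hαf0 hγ0) hθ0]
      have h2 : αk * θ⁻¹ + αf * γk > 0 := hden θ⁻¹ (by positivity)
      field_simp
      ring
  have hd : Tendsto (fun θ => (Gk θ).det) atTop (nhds (L₁ * L₂)) := by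
    have key := aux_comp_inv F₂ (fun θ => (Gk θ).det) ?_ ?_
    · convert key using 2
      show L₁ * L₂ = F₂ 0
      rw [hF₂, hL₁, hL₂]
      simp only [mul_zero, zero_add, zero_mul, sub_zero, add_zero]
      field_simp
    · apply ContinuousAt.div (by fun_prop) (by fun_prop)
      have := (hden 0 le_rfl).ne'
      simp only [mul_zero, zero_add] at this ⊢
      positivity
    · intro θ hθ
      have hθ0 : (0:ℝ) < θ := by linarith
      show (Gk θ).det = F₂ θ⁻¹
      rw [hdet θ, hF₂]
      simp only
      have h1 : αk + αf * γk * θ > 0 := by nlinarith [mul_pos (mul_pos hαf0 hγ0) hθ0]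
      have h2 : αk * θ⁻¹ + αf * γk > 0 := hden θ⁻¹ (by positivity)
      field_simp
      ring
  by_cases hcase : L₂ ≤ L₁
  · obtain ⟨e₁, e₂, hv, he₁, he₂⟩ := aux_quad _ _ L₁ L₂ hcase ht hd
    exact ⟨e₁, e₂, fun θ _ => aux_roots _ _ _ (hv θ).1 (hv θ).2, he₁, he₂⟩
  · push_neg at hcase
    have ht' : Tendsto (fun θ => (Gk θ).trace) atTop (nhds (L₂ + L₁)) := by
      rwa [add_comm]
    have hd' : Tendsto (fun θ => (Gk θ).det) atTop (nhds (L₂ * L₁)) := by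
      rwa [mul_comm]
    obtain ⟨e₁, e₂, hv, he₁, he₂⟩ := aux_quad _ _ L₂ L₁ hcase.le ht' hd'
    refine ⟨e₂, e₁, fun θ _ => ?_, he₂, he₁⟩
    rw [aux_roots _ (e₁ θ) (e₂ θ) (hv θ).1 (hv θ).2]
    exact Multiset.pair_comm _ _
end
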